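/- Let N ≥ 1 and let M ⊆ ℝ^N be a compact and locally downwards closed set. Then every connected component of M is compact, open in M, and itself locally downwards closed. -/

import Mathlib

/-- `M` is downwards closed relative to the open set `U` and the vector `u`. -/
def DownwardsClosedRel {N : ℕ} (M U : Set (Fin N → ℝ)) (u : Fin N → ℝ) : Prop :=
  IsClosed M ∧ ∀ y ∈ U ∩ M, ∀ t : ℝ, 0 < t → y - t • u ∈ U → y - t • u ∈ interior M

/-- `M` is locally downwards closed. -/
def LocallyDownwardsClosed {N : ℕ} (M : Set (Fin N → ℝ)) : Prop :=
  IsClosed M ∧ ∀ x : Fin N → ℝ, ∃ (U : Set (Fin N → ℝ)) (u : Fin N → ℝ),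
    IsOpen U ∧ x ∈ U ∧ u ≠ 0 ∧ DownwardsClosedRel M U u

/-- Every connected component of a compact, locally downwards closed `M ⊆ ℝ^N`
is compact, open in `M`, and locally downwards closed. -/
theorem statement8 {N : ℕ} (hN : 1 ≤ N) (M : Set (Fin N → ℝ))
    (hMcpt : IsCompact M) (hMldc : LocallyDownwardsClosed M)
    (x : Fin N → ℝ) (hx : x ∈ M) :
    IsCompact (connectedComponentIn M x) ∧
    (∃ V : Set (Fin N → ℝ), IsOpen V ∧ connectedComponentIn M x = M ∩ V) ∧
    LocallyDownwardsClosed (connectedComponentIn M x) := by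
  classical
  obtain ⟨hMcl, hloc⟩ := hMldc
  -- Key lemma: components are "locally everything"
  have key : ∀ z ∈ M, ∃ ε > 0, M ∩ Metric.ball z ε ⊆ connectedComponentIn M z := by
    intro z hz
    obtain ⟨U, u, hUopen, hzU, hu, hMc, hdc⟩ := hloc z
    obtain ⟨r, hr, hball⟩ := Metric.isOpen_iff.1 hUopen z hzU
    set t : ℝ := r / (2 * (‖u‖ + 1)) with ht_def
    have hupos : (0:ℝ) < ‖u‖ + 1 := by positivity
    have htpos : 0 < t := by positivity
    have h1 : t * (‖u‖ + 1) = r / 2 := by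
      field_simp [ht_def]
      have h2 : t * (2 * (‖u‖ + 1)) = r := by
        rw [ht_def]; exact div_mul_cancel₀ r (by positivity)
      linarith
    have htu : t * ‖u‖ < r / 2 := by nlinarith
    -- moving downwards stays in interior M
    have hseg : ∀ y ∈ M, dist y z < r / 2 → ∀ s : ℝ, 0 < s → s ≤ t →
        y - s • u ∈ interior M := by
      intro y hy hyz s hs hst
      have hyU : y ∈ U := hball (by
        rw [Metric.mem_ball]
        linarith)
      have hmem : y - s • u ∈ Metric.ball z r := by
        rw [Metric.mem_ball]
        have h2 : dist (y - s • u) y = s * ‖u‖ := by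
          rw [dist_eq_norm, sub_sub_cancel_left, norm_neg, norm_smul,
            Real.norm_eq_abs, abs_of_pos hs]
        have h3 : s * ‖u‖ ≤ t * ‖u‖ := mul_le_mul_of_nonneg_right hst (norm_nonneg u)
        calc dist (y - s • u) z ≤ dist (y - s • u) y + dist y z := dist_triangle _ _ _
          _ = s * ‖u‖ + dist y z := by rw [h2]
          _ < r / 2 + r / 2 := by linarith
          _ = r := by ring
      exact hdc y ⟨hyU, hy⟩ s hs (hball hmem)
    -- the downward segment connects y to y - t • u inside M
    have hconn : ∀ y ∈ M, dist y z < r / 2 →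
        y - t • u ∈ connectedComponentIn M y := by
      intro y hy hyz
      have hsub : segment ℝ y (y - t • u) ⊆ M := by
        intro w hw
        rw [segment_eq_image] at hw
        obtain ⟨θ, ⟨hθ0, hθ1⟩, rfl⟩ := hw
        have hform : (1 - θ) • y + θ • (y - t • u) = y - (θ * t) • u := by
          module
        show (1 - θ) • y + θ • (y - t • u) ∈ M
        rw [hform]
        rcases hθ0.eq_or_lt with h | h
        · simp [← h, hy]
        · exact interior_subset (hseg y hy hyz (θ * t) (mul_pos h htpos)
            (mul_le_of_le_one_left htpos.le hθ1))
      exact (convex_segment _ _).isPreconnected.subset_connectedComponentIn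
        (left_mem_segment _ _ _) hsub (right_mem_segment _ _ _)
    -- z - t • u is an interior point
    have hzint : z - t • u ∈ interior M :=
      hseg z hz (by simpa using half_pos hr) t htpos le_rfl
    obtain ⟨δ, hδ, hballδ⟩ := Metric.isOpen_iff.1 isOpen_interior _ hzint
    refine ⟨min (r / 2) δ, lt_min (half_pos hr) hδ, ?_⟩
    rintro y ⟨hyM, hyb⟩
    rw [Metric.mem_ball] at hyb
    have hyz : dist y z < r / 2 := lt_of_lt_of_le hyb (min_le_left _ _)
    have hyδ : dist y z < δ := lt_of_lt_of_le hyb (min_le_right _ _)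
    have hA : y - t • u ∈ connectedComponentIn M y := hconn y hyM hyz
    have hB : z - t • u ∈ connectedComponentIn M z :=
      hconn z hz (by simpa using half_pos hr)
    have hballM : Metric.ball (z - t • u) δ ⊆ M := hballδ.trans interior_subset
    have hyt : y - t • u ∈ Metric.ball (z - t • u) δ := by
      rw [Metric.mem_ball, dist_sub_right]
      exact hyδ
    have h3 : Metric.ball (z - t • u) δ ⊆ connectedComponentIn M (z - t • u) :=
      (convex_ball _ _).isPreconnected.subset_connectedComponentIn
        (Metric.mem_ball_self hδ) hballM
    have e1 : connectedComponentIn M z = connectedComponentIn M (z - t • u) :=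
      connectedComponentIn_eq hB
    have e2 : connectedComponentIn M (z - t • u) = connectedComponentIn M (y - t • u) :=
      connectedComponentIn_eq (h3 hyt)
    have e3 : connectedComponentIn M y = connectedComponentIn M (y - t • u) :=
      connectedComponentIn_eq hA
    rw [e1, e2, ← e3]
    exact mem_connectedComponentIn hyM
  have hCsub : connectedComponentIn M x ⊆ M := connectedComponentIn_subset M x
  -- the component is closed
  have hCclosed : IsClosed (connectedComponentIn M x) := by
    apply isClosed_of_closure_subset
    apply IsPreconnected.subset_connectedComponentIn
    · exact (isPreconnected_connectedComponentIn).closure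
    · exact subset_closure (mem_connectedComponentIn hx)
    · exact closure_minimal hCsub hMcl
  -- the component is open in M
  have exV : ∃ V : Set (Fin N → ℝ), IsOpen V ∧ connectedComponentIn M x = M ∩ V := by
    have hchoice : ∀ z : Fin N → ℝ, ∃ ε : ℝ, 0 < ε ∧
        (z ∈ M → M ∩ Metric.ball z ε ⊆ connectedComponentIn M z) := by
      intro z
      by_cases hz : z ∈ M
      · obtain ⟨ε, hε, hsub⟩ := key z hz
        exact ⟨ε, hε, fun _ => hsub⟩
      · exact ⟨1, one_pos, fun h => absurd h hz⟩
    choose ε hεpos hεsub using hchoice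
    refine ⟨⋃ z ∈ connectedComponentIn M x, Metric.ball z (ε z), ?_, ?_⟩
    · exact isOpen_biUnion fun z _ => Metric.isOpen_ball
    · apply Set.Subset.antisymm
      · intro w hw
        exact ⟨hCsub hw, Set.mem_biUnion hw (Metric.mem_ball_self (hεpos w))⟩
      · rintro w ⟨hwM, hwV⟩
        obtain ⟨z, hzC, hwz⟩ := Set.mem_iUnion₂.1 hwV
        have hzM : z ∈ M := hCsub hzC
        have hw' : w ∈ connectedComponentIn M z := hεsub z hzM ⟨hwM, hwz⟩
        rw [connectedComponentIn_eq hzC]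
        exact hw'
  obtain ⟨V, hVopen, hCV⟩ := exV
  refine ⟨hMcpt.of_isClosed_subset hCclosed hCsub, ⟨V, hVopen, hCV⟩, hCclosed, ?_⟩
  intro z
  by_cases hzC : z ∈ connectedComponentIn M x
  · obtain ⟨U, u, hUopen, hzU, hu, hMc, hdc⟩ := hloc z
    have hzV : z ∈ V := (hCV ▸ hzC).2
    refine ⟨U ∩ V, u, hUopen.inter hVopen, ⟨hzU, hzV⟩, hu, hCclosed, ?_⟩
    rintro y ⟨⟨hyU, hyV⟩, hyC⟩ t ht ⟨hytU, hytV⟩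
    have hyM : y ∈ M := hCsub hyC
    have hint : y - t • u ∈ interior M := hdc y ⟨hyU, hyM⟩ t ht hytU
    have hsub : interior M ∩ V ⊆ interior (connectedComponentIn M x) := by
      rw [hCV]
      exact interior_maximal (fun w hw => ⟨interior_subset hw.1, hw.2⟩)
        (isOpen_interior.inter hVopen)
    exact hsub ⟨hint, hytV⟩
  · refine ⟨(connectedComponentIn M x)ᶜ, Pi.single ⟨0, hN⟩ 1,
      hCclosed.isOpen_compl, hzC, ?_, hCclosed, ?_⟩
    · intro h
      have := congrFun h ⟨0, hN⟩
      simp [Pi.single_eq_same] at this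
    · rintro y ⟨hy1, hy2⟩ t ht _
      exact absurd hy2 hy1
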